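/- Let x, y be real numbers with x + y < 1 and y < 1, and let h(z) = ₃F₂(z−y, z, z; x−y+z, 1−x−y+z; 1) for z in a neighborhood of 0, assuming neither x−y nor 1−x−y is a nonpositive integer. Then h is differentiable at z = 0 and h′(0) = 0. -/

import Mathlib

open scoped BigOperators

/-- The Pochhammer symbol `(a)ₙ = a (a+1) ⋯ (a+n-1)`. -/
noncomputable def poch (a : ℝ) (n : ℕ) : ℝ := ∏ i ∈ Finset.range n, (a + i)

/-- The generalized hypergeometric series `₃F₂(a₁,a₂,a₃; b₁,b₂; 1)` at `x = 1`. -/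
noncomputable def F32 (a₁ a₂ a₃ b₁ b₂ : ℝ) : ℝ :=
  ∑' n : ℕ,
    poch a₁ n * poch a₂ n * poch a₃ n /
      (poch b₁ n * poch b₂ n * (Nat.factorial n : ℝ))

/-- `t` is not a nonpositive integer. -/
def NotNonposInt (t : ℝ) : Prop := ∀ m : ℕ, t ≠ -(m : ℝ)


noncomputable def tt (y A B z : ℝ) (n : ℕ) : ℝ :=
  poch (z - y) n * poch z n * poch z n /
    (poch (A + z) n * poch (B + z) n * (Nat.factorial n : ℝ))

lemma F32_eq_tsum_tt (x y z : ℝ) :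
    F32 (z - y) z z (x - y + z) (1 - x - y + z) = ∑' n, tt y (x - y) (1 - x - y) z n := rfl

lemma tt_zero (y A B z : ℝ) : tt y A B z 0 = 1 := by
  simp [tt, poch]

lemma tt_succ (y A B z : ℝ) (n : ℕ) :
    tt y A B z (n + 1) = tt y A B z n *
      ((z - y + n) * (z + n) * (z + n) / ((A + z + n) * (B + z + n) * ((n : ℝ) + 1))) := by
  have hnum : poch (z-y) (n+1) * poch z (n+1) * poch z (n+1)
      = (poch (z-y) n * poch z n * poch z n) * ((z - y + n) * (z + n) * (z + n)) := by
    simp only [poch, Finset.prod_range_succ]; ring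
  have hden : poch (A+z) (n+1) * poch (B+z) (n+1) * ((n+1).factorial : ℝ)
      = (poch (A+z) n * poch (B+z) n * (n.factorial : ℝ))
        * ((A + z + n) * (B + z + n) * ((n:ℝ)+1)) := by
    simp only [poch, Finset.prod_range_succ, Nat.factorial_succ]; push_cast; ring
  simp only [tt]
  rw [hnum, hden, mul_div_mul_comm]

lemma summable_tail (E : ℝ) (p : ℝ) (hp : 1 < p) :
    Summable (fun n : ℕ => E / ((n:ℝ)+1)^p) := by
  have h0 : Summable (fun n : ℕ => ((n:ℝ)^p)⁻¹) := Real.summable_nat_rpow_inv.mpr hp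
  have h1 : Summable (fun n : ℕ => (((n+1:ℕ):ℝ)^p)⁻¹) := (summable_nat_add_iff 1).mpr h0
  have h2 : Summable (fun n : ℕ => (((n:ℝ)+1)^p)⁻¹) := by
    convert h1 using 3 with n
    push_cast
    ring
  simpa [div_eq_mul_inv] using h2.mul_left E

lemma key3 (a₁ a₂ a₃ b₁ b₂ b₃ : ℝ) (h : a₁ + a₂ + a₃ < b₁ + b₂ + b₃) :
    ∃ N : ℕ, ∀ n : ℕ, N ≤ n →
      ((n:ℝ) + a₁) * ((n:ℝ) + a₂) * ((n:ℝ) + a₃) ≤ ((n:ℝ) + b₁) * ((n:ℝ) + b₂) * ((n:ℝ) + b₃) := by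
  set κ : ℝ := b₁ + b₂ + b₃ - (a₁ + a₂ + a₃) with hκdef
  set β : ℝ := (b₁*b₂ + b₁*b₃ + b₂*b₃) - (a₁*a₂ + a₁*a₃ + a₂*a₃) with hβdef
  set γ : ℝ := b₁*b₂*b₃ - a₁*a₂*a₃ with hγdef
  have hκ : 0 < κ := by rw [hκdef]; linarith
  refine ⟨⌈(|β| + |γ|)/κ⌉₊ + 1, fun n hn => ?_⟩
  have hn1 : (1:ℝ) ≤ (n:ℝ) := by exact_mod_cast Nat.one_le_iff_ne_zero.mpr (by omega)
  have hn2 : (|β| + |γ|)/κ ≤ (n:ℝ) := by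
    refine le_trans (Nat.le_ceil _) ?_
    exact_mod_cast Nat.le_of_succ_le hn
  have hn3 : |β| + |γ| ≤ (n:ℝ) * κ := by rwa [div_le_iff₀ hκ] at hn2
  have hq : 0 ≤ κ*(n:ℝ)^2 + β*(n:ℝ) + γ := by
    nlinarith [le_abs_self β, neg_abs_le β, le_abs_self γ, neg_abs_le γ, hn1,
      mul_le_mul_of_nonneg_right hn3 (by linarith : (0:ℝ) ≤ (n:ℝ))]
  have hid : ((n:ℝ) + b₁) * ((n:ℝ) + b₂) * ((n:ℝ) + b₃) - ((n:ℝ) + a₁) * ((n:ℝ) + a₂) * ((n:ℝ) + a₃)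
      = κ*(n:ℝ)^2 + β*(n:ℝ) + γ := by rw [hκdef, hβdef, hγdef]; ring
  linarith

lemma chain (u g : ℕ → ℝ) (N : ℕ) (h : ∀ n, N ≤ n → u (n+1) * g (n+1) ≤ u n * g n) :
    ∀ n, N ≤ n → u n * g n ≤ u N * g N := by
  intro n hn
  induction n, hn using Nat.le_induction with
  | base => exact le_rfl
  | succ n hn ih => exact (h n hn).trans ih

set_option maxHeartbeats 2000000 in
theorem deriv_F32_eq_zero (x y : ℝ) (hxy : x + y < 1) (hy : y < 1)
    (h₁ : NotNonposInt (x - y)) (h₂ : NotNonposInt (1 - x - y)) :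
    HasDerivAt (fun z => F32 (z - y) z z (x - y + z) (1 - x - y + z)) 0 0 := by
  obtain ⟨a, ha⟩ : ∃ a : ℝ, a = x - y := ⟨_, rfl⟩
  obtain ⟨b, hbdef⟩ : ∃ b : ℝ, b = 1 - x - y := ⟨_, rfl⟩
  simp only [← ha, ← hbdef]
  rw [← ha] at h₁
  rw [← hbdef] at h₂
  have hb : 0 < b := by rw [hbdef]; linarith
  obtain ⟨i₀, hi₀⟩ : ∃ i₀ : ℕ, (1 - a : ℝ) ≤ i₀ := ⟨⌈1 - a⌉₊, Nat.le_ceil _⟩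
  have hne : ∀ i : ℕ, a + (i:ℝ) ≠ 0 := by
    intro i hcon
    exact h₁ i (by linarith)
  obtain ⟨d, hd0, hdle⟩ : ∃ d : ℝ, 0 < d ∧ ∀ i : ℕ, i ≤ i₀ → d ≤ |a + (i:ℝ)| := by
    refine ⟨(Finset.range (i₀+1)).inf' (by simp) (fun i => |a + (i:ℝ)|), ?_, ?_⟩
    · rw [Finset.lt_inf'_iff]
      intro i _
      exact abs_pos.mpr (hne i)
    · intro i hi
      exact Finset.inf'_le _ (Finset.mem_range.mpr (by omega))
  obtain ⟨m, hm0, hmd, hmb, hmH⟩ : ∃ m : ℝ, 0 < m ∧ m ≤ d/2 ∧ m ≤ b/2 ∧ m ≤ 1/2 :=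
    ⟨min (min (d/2) (b/2)) (1/2), lt_min (lt_min (by linarith) (by linarith)) (by norm_num),
      (min_le_left _ _).trans (min_le_left _ _), (min_le_left _ _).trans (min_le_right _ _),
      min_le_right _ _⟩
  obtain ⟨p, hp1, hpe⟩ : ∃ p : ℝ, 1 < p ∧ p = 1 + (1 - y)/4 := ⟨_, by linarith, rfl⟩
  obtain ⟨δ, hδ0, hδm, hδ8⟩ : ∃ δ : ℝ, 0 < δ ∧ δ ≤ m ∧ δ ≤ (1 - y)/8 :=
    ⟨min m ((1-y)/8), lt_min hm0 (by linarith), min_le_left _ _, min_le_right _ _⟩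
  have hδd : δ ≤ d/2 := hδm.trans hmd
  have hδb : δ ≤ b/2 := hδm.trans hmb
  have hδhalf : δ ≤ 1/2 := hδm.trans hmH
  -- factor lower bounds
  have hfacA : ∀ z : ℝ, |z| ≤ δ → ∀ i : ℕ, m ≤ |a + z + (i:ℝ)| := by
    intro z hz i
    have hz' := abs_le.mp hz
    rcases le_or_gt i i₀ with hi | hi
    · have h1 : d ≤ |a + (i:ℝ)| := hdle i hi
      have h2 : |a + (i:ℝ)| - |z| ≤ |a + z + (i:ℝ)| := by
        have h3 : |a + (i:ℝ)| ≤ |a + z + (i:ℝ)| + |z| := by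
          calc |a + (i:ℝ)| = |(a + z + (i:ℝ)) + (-z)| := by ring_nf
            _ ≤ |a + z + (i:ℝ)| + |(-z)| := abs_add_le _ _
            _ = |a + z + (i:ℝ)| + |z| := by rw [abs_neg]
        linarith
      linarith [hz.trans hδd, hmd]
    · have hii : (i₀:ℝ) + 1 ≤ (i:ℝ) := by exact_mod_cast hi
      have hc : (1 - a) ≤ (i₀:ℝ) := hi₀
      have h1 : 1 ≤ a + (i:ℝ) := by linarith
      have h2 : 1/2 ≤ a + z + (i:ℝ) := by linarith [hz.trans hδhalf, (abs_le.mp (hz.trans hδhalf)).1]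
      calc m ≤ 1/2 := hmH
        _ ≤ a + z + (i:ℝ) := h2
        _ ≤ |a + z + (i:ℝ)| := le_abs_self _
  have hfacB : ∀ z : ℝ, |z| ≤ δ → ∀ i : ℕ, m ≤ |b + z + (i:ℝ)| := by
    intro z hz i
    have hz' := (abs_le.mp hz).1
    have hi : (0:ℝ) ≤ (i:ℝ) := Nat.cast_nonneg i
    have h2 : b/2 ≤ b + z + (i:ℝ) := by linarith
    calc m ≤ b/2 := hmb
      _ ≤ b + z + (i:ℝ) := h2
      _ ≤ |b + z + (i:ℝ)| := le_abs_self _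
  -- poch lower bound
  have pochlb : ∀ (w : ℝ), (∀ i : ℕ, m ≤ |w + (i:ℝ)|) → ∀ n : ℕ, m^n ≤ |poch w n| := by
    intro w hw n
    rw [poch, Finset.abs_prod]
    calc m ^ n = ∏ _i ∈ Finset.range n, m := by rw [Finset.prod_const, Finset.card_range]
      _ ≤ ∏ i ∈ Finset.range n, |w + (i:ℝ)| :=
          Finset.prod_le_prod (fun i _ => hm0.le) (fun i _ => hw i)
  -- upper bounds
  obtain ⟨K, hK⟩ : ∃ K : ℝ, K = |y| + δ + 1 := ⟨_, rfl⟩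
  have hK1 : 1 ≤ K := by rw [hK]; linarith [abs_nonneg y]
  set Q : ℕ → ℝ := fun n => ∏ i ∈ Finset.range n, ((i:ℝ) + K) with hQ
  have hQ0 : ∀ n, 0 ≤ Q n := by
    intro n
    rw [hQ]
    exact Finset.prod_nonneg fun i _ => by positivity
  have pochub1 : ∀ z : ℝ, |z| ≤ δ → ∀ n, |poch (z - y) n| ≤ Q n := by
    intro z hz n
    have hz' := abs_le.mp hz
    rw [poch, hQ, Finset.abs_prod]
    refine Finset.prod_le_prod (fun i _ => abs_nonneg _) (fun i _ => ?_)
    have h4 : |z - y| ≤ |z| + |y| := abs_sub z y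
    have h5 : |(i:ℝ)| = (i:ℝ) := abs_of_nonneg (Nat.cast_nonneg i)
    have h3 : |z - y + (i:ℝ)| ≤ |z| + |y| + (i:ℝ) := by
      calc |z - y + (i:ℝ)| ≤ |z - y| + |(i:ℝ)| := abs_add_le _ _
        _ ≤ |z| + |y| + (i:ℝ) := by rw [h5]; linarith
    rw [hK]
    linarith
  have pochub2 : ∀ z : ℝ, |z| ≤ δ → ∀ n, |poch z (n+1)| ≤ |z| * Q n := by
    intro z hz n
    have hz' := abs_le.mp hz
    rw [poch, Finset.prod_range_succ']
    rw [abs_mul]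
    simp only [Nat.cast_zero, add_zero]
    rw [mul_comm]
    refine mul_le_mul_of_nonneg_left ?_ (abs_nonneg z)
    rw [hQ, Finset.abs_prod]
    refine Finset.prod_le_prod (fun i _ => abs_nonneg _) (fun i _ => ?_)
    have h5 : |(i:ℝ) + 1| = (i:ℝ) + 1 := abs_of_nonneg (by positivity)
    have h3 : |z + ((i:ℕ) + 1 : ℕ)| ≤ |z| + ((i:ℝ) + 1) := by
      push_cast
      calc |z + ((i:ℝ) + 1)| ≤ |z| + |(i:ℝ) + 1| := abs_add_le _ _
        _ = |z| + ((i:ℝ) + 1) := by rw [h5]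
    rw [hK]
    push_cast at h3 ⊢
    linarith [abs_nonneg y]
  -- D and term bound
  set D : ℕ → ℝ := fun n => Q n * Q (n-1) * Q (n-1) / (m^n * m^n * (Nat.factorial n : ℝ)) with hD
  have hD0 : ∀ n, 0 ≤ D n := by
    intro n
    rw [hD]
    have h1 : (0:ℝ) ≤ Q n * Q (n-1) * Q (n-1) := mul_nonneg (mul_nonneg (hQ0 _) (hQ0 _)) (hQ0 _)
    have h2 : (0:ℝ) < m^n * m^n * (Nat.factorial n : ℝ) := by
      have h3 := pow_pos hm0 n
      have hf : (0:ℝ) < (Nat.factorial n : ℝ) := by exact_mod_cast Nat.factorial_pos n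
      positivity
    exact div_nonneg h1 h2.le
  have tb : ∀ z : ℝ, |z| ≤ δ → ∀ n : ℕ, |tt y a b z (n+1)| ≤ z^2 * D (n+1) := by
    intro z hz n
    have hfpos : (0:ℝ) < ((n+1).factorial : ℝ) := by exact_mod_cast Nat.factorial_pos (n+1)
    have n1 : (0:ℝ) ≤ |z| * Q n := mul_nonneg (abs_nonneg z) (hQ0 n)
    have hnum : |poch (z - y) (n+1) * poch z (n+1) * poch z (n+1)|
        ≤ Q (n+1) * (|z| * Q n) * (|z| * Q n) := by
      rw [abs_mul, abs_mul]
      have u1 := pochub1 z hz (n+1)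
      have u2 := pochub2 z hz n
      exact mul_le_mul (mul_le_mul u1 u2 (abs_nonneg _) (hQ0 _)) u2 (abs_nonneg _)
        (mul_nonneg (hQ0 _) n1)
    have l1 : m^(n+1) ≤ |poch (a + z) (n+1)| := pochlb (a + z) (hfacA z hz) (n+1)
    have l2 : m^(n+1) ≤ |poch (b + z) (n+1)| := pochlb (b + z) (hfacB z hz) (n+1)
    have hden : m^(n+1) * m^(n+1) * ((n+1).factorial : ℝ)
        ≤ |poch (a + z) (n+1) * poch (b + z) (n+1) * ((n+1).factorial : ℝ)| := by
      rw [abs_mul, abs_mul, abs_of_pos hfpos]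
      have n2 : (0:ℝ) ≤ m^(n+1) := (pow_pos hm0 _).le
      exact mul_le_mul_of_nonneg_right
        (mul_le_mul l1 l2 n2 (abs_nonneg _)) hfpos.le
    have hdenpos : (0:ℝ) < m^(n+1) * m^(n+1) * ((n+1).factorial : ℝ) := by
      have h3 := pow_pos hm0 (n+1)
      positivity
    have step1 : |tt y a b z (n+1)| ≤ (Q (n+1) * (|z| * Q n) * (|z| * Q n)) /
        (m^(n+1) * m^(n+1) * ((n+1).factorial : ℝ)) := by
      simp only [tt]
      rw [abs_div]
      exact div_le_div₀ (mul_nonneg (mul_nonneg (hQ0 _) n1) n1) hnum hdenpos hden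
    refine step1.trans (le_of_eq ?_)
    have hz2 : Q (n+1) * (|z| * Q n) * (|z| * Q n) = z^2 * (Q (n+1) * Q n * Q n) := by
      rw [← sq_abs z]; ring
    rw [hz2, hD]
    simp only [Nat.add_sub_cancel]
    rw [mul_div_assoc]
  -- key3 constants
  obtain ⟨N₂, hN₂⟩ := key3 (δ - y) δ δ (1 - p) (a - δ) (b - δ) (by
    rw [ha, hbdef, hpe]
    linarith [hδ8])
  obtain ⟨N₁, hN₁⟩ : ∃ N₁ : ℕ, (|y| + |a| + |b| + p + δ + 2 : ℝ) ≤ N₁ :=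
    ⟨⌈|y| + |a| + |b| + p + δ + 2⌉₊, Nat.le_ceil _⟩
  obtain ⟨N, hNdef⟩ : ∃ N : ℕ, N = max (max N₁ N₂) 1 := ⟨_, rfl⟩
  have hNreal : ∀ n : ℕ, N ≤ n → |y| + |a| + |b| + p + δ + 2 ≤ (n:ℝ) := by
    intro n hn
    rw [hNdef] at hn
    calc |y| + |a| + |b| + p + δ + 2 ≤ (N₁:ℝ) := hN₁
      _ ≤ (n:ℝ) := by
          exact_mod_cast le_trans (le_trans (le_max_left N₁ N₂) (le_max_left _ 1)) hn
  have hN2le : ∀ n : ℕ, N ≤ n → N₂ ≤ n := fun n hn =>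
    le_trans (le_trans (le_max_right N₁ N₂) (le_max_left _ 1)) (hNdef ▸ hn)
  have hNge1 : 1 ≤ N := hNdef ▸ le_max_right _ 1
  -- the ratio step
  set g : ℕ → ℝ := fun n => ((n:ℝ)+1)^p with hg
  have hgpos : ∀ n : ℕ, (0:ℝ) < g n := fun n => Real.rpow_pos_of_pos (by positivity) _
  have step : ∀ z : ℝ, |z| ≤ δ → ∀ n : ℕ, N ≤ n →
      |tt y a b z (n+1)| * g (n+1) ≤ |tt y a b z n| * g n := by
    intro z hz n hn
    have hz' := abs_le.mp hz
    have hnn := hNreal n hn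
    have hay := le_abs_self a
    have hay' := neg_abs_le a
    have hby := le_abs_self b
    have hby' := neg_abs_le b
    have hyy := le_abs_self y
    have hyy' := neg_abs_le y
    have hax := abs_nonneg a
    have hbx := abs_nonneg b
    have hyx := abs_nonneg y
    have P1 : (0:ℝ) ≤ z - y + n := by linarith
    have P2 : (0:ℝ) ≤ z + n := by linarith
    have P3 : (0:ℝ) < a + z + n := by linarith
    have P4 : (0:ℝ) < b + z + n := by linarith
    have P5 : (0:ℝ) < (n:ℝ) + 1 := by positivity
    have P6 : (0:ℝ) ≤ (n:ℝ) + (1 - p) := by linarith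
    have P7 : (0:ℝ) ≤ (n:ℝ) + (a - δ) := by linarith
    have P8 : (0:ℝ) ≤ (n:ℝ) + (b - δ) := by linarith
    have hkey := hN₂ n (hN2le n hn)
    have e1 : z - y + (n:ℝ) ≤ (n:ℝ) + (δ - y) := by linarith
    have e2 : z + (n:ℝ) ≤ (n:ℝ) + δ := by linarith
    have e3 : (n:ℝ) + (a - δ) ≤ a + z + n := by linarith
    have e4 : (n:ℝ) + (b - δ) ≤ b + z + n := by linarith
    have Pd : (0:ℝ) ≤ (n:ℝ) + (δ - y) := le_trans P1 e1
    have Pd2 : (0:ℝ) ≤ (n:ℝ) + δ := le_trans P2 e2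
    have hXb : (z - y + n) * (z + n) * (z + n) ≤ ((n:ℝ) + (δ - y)) * ((n:ℝ) + δ) * ((n:ℝ) + δ) :=
      mul_le_mul (mul_le_mul e1 e2 P2 Pd) e2 P2 (mul_nonneg Pd Pd2)
    have hYb : ((n:ℝ) + (1 - p)) * ((n:ℝ) + (a - δ)) * ((n:ℝ) + (b - δ))
        ≤ ((n:ℝ) + 1 - p) * ((a + z + n) * (b + z + n)) := by
      have h9 : ((n:ℝ) + (a - δ)) * ((n:ℝ) + (b - δ)) ≤ (a + z + n) * (b + z + n) :=
        mul_le_mul e3 e4 P8 P3.le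
      calc ((n:ℝ) + (1 - p)) * ((n:ℝ) + (a - δ)) * ((n:ℝ) + (b - δ))
          = ((n:ℝ) + (1 - p)) * (((n:ℝ) + (a - δ)) * ((n:ℝ) + (b - δ))) := by ring
        _ ≤ ((n:ℝ) + (1 - p)) * ((a + z + n) * (b + z + n)) := mul_le_mul_of_nonneg_left h9 P6
        _ = ((n:ℝ) + 1 - p) * ((a + z + n) * (b + z + n)) := by ring
    have hYpos : (0:ℝ) < (a + z + n) * (b + z + n) * ((n:ℝ) + 1) := mul_pos (mul_pos P3 P4) P5
    have hρ : (z - y + n) * (z + n) * (z + n) / ((a + z + n) * (b + z + n) * ((n:ℝ) + 1))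
        ≤ ((n:ℝ) + 1 - p)/((n:ℝ) + 1) := by
      rw [div_le_div_iff₀ hYpos P5]
      calc (z - y + n) * (z + n) * (z + n) * ((n:ℝ)+1)
          ≤ (((n:ℝ) + (1-p)) * ((n:ℝ) + (a - δ)) * ((n:ℝ) + (b - δ))) * ((n:ℝ)+1) :=
            mul_le_mul_of_nonneg_right (hXb.trans hkey) P5.le
        _ ≤ (((n:ℝ) + 1 - p) * ((a + z + n) * (b + z + n))) * ((n:ℝ)+1) :=
            mul_le_mul_of_nonneg_right hYb P5.le
        _ = ((n:ℝ) + 1 - p) * ((a + z + n) * (b + z + n) * ((n:ℝ)+1)) := by ring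
    have hb2 : (0:ℝ) < (n:ℝ) + 2 := by positivity
    have hBer : ((n:ℝ) + 1 - p)/((n:ℝ) + 1) ≤ ((n:ℝ)+1)^p / ((n:ℝ)+2)^p := by
      have hs : (-1:ℝ) ≤ -(1/((n:ℝ)+2)) := by
        have h7 : 1/((n:ℝ)+2) ≤ 1 := by
          rw [div_le_one hb2]; linarith
        linarith
      have hber := one_add_mul_self_le_rpow_one_add hs hp1.le
      have h1 : (1:ℝ) + -(1/((n:ℝ)+2)) = ((n:ℝ)+1)/((n:ℝ)+2) := by
        field_simp
        ring
      have h2 : (((n:ℝ)+1)/((n:ℝ)+2))^p = ((n:ℝ)+1)^p/((n:ℝ)+2)^p :=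
        Real.div_rpow (by positivity) hb2.le p
      rw [h1, h2] at hber
      refine le_trans ?_ hber
      have hpn : p/((n:ℝ)+2) ≤ p/((n:ℝ)+1) := by
        gcongr <;> linarith
      have heq : ((n:ℝ) + 1 - p)/((n:ℝ) + 1) = 1 - p/((n:ℝ)+1) := by
        rw [eq_sub_iff_add_eq, ← add_div, div_eq_iff (ne_of_gt P5)]
        ring
      have hne2 : p * -(1/((n:ℝ)+2)) = -(p/((n:ℝ)+2)) := by ring
      rw [heq]
      linarith
    have habs : |tt y a b z (n+1)| = |tt y a b z n| *
        |(z - y + n) * (z + n) * (z + n) / ((a + z + n) * (b + z + n) * ((n:ℝ) + 1))| := by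
      rw [tt_succ, abs_mul]
    have hrabs : |(z - y + n) * (z + n) * (z + n) / ((a + z + n) * (b + z + n) * ((n:ℝ) + 1))|
        = (z - y + n) * (z + n) * (z + n) / ((a + z + n) * (b + z + n) * ((n:ℝ) + 1)) :=
      abs_of_nonneg (div_nonneg (mul_nonneg (mul_nonneg P1 P2) P2) hYpos.le)
    have hgs : g (n+1) = ((n:ℝ)+2)^p := by
      simp only [hg]
      rw [show (((n+1:ℕ)):ℝ)+1 = (n:ℝ)+2 from by push_cast; ring]
    have hpow2 : (0:ℝ) < ((n:ℝ)+2)^p := Real.rpow_pos_of_pos hb2 _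
    have hfin : ((z - y + n) * (z + n) * (z + n) / ((a + z + n) * (b + z + n) * ((n:ℝ) + 1)))
        * ((n:ℝ)+2)^p ≤ ((n:ℝ)+1)^p := by
      calc ((z - y + n) * (z + n) * (z + n) / ((a + z + n) * (b + z + n) * ((n:ℝ) + 1)))
            * ((n:ℝ)+2)^p
          ≤ (((n:ℝ)+1)^p / ((n:ℝ)+2)^p) * ((n:ℝ)+2)^p :=
            mul_le_mul_of_nonneg_right (hρ.trans hBer) hpow2.le
        _ = ((n:ℝ)+1)^p := div_mul_cancel₀ _ (ne_of_gt hpow2)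
    rw [habs, hrabs, hgs]
    have hgn : g n = ((n:ℝ)+1)^p := by simp only [hg]
    rw [hgn, mul_assoc]
    exact mul_le_mul_of_nonneg_left hfin (abs_nonneg _)
  -- uniform tail bound
  have tail : ∀ z : ℝ, |z| ≤ δ → ∀ n : ℕ, N ≤ n →
      |tt y a b z n| ≤ z^2 * (D N * g N / g n) := by
    intro z hz n hn
    have hch := chain (fun k => |tt y a b z k|) g N (fun k hk => step z hz k hk) n hn
    have hNb : |tt y a b z N| ≤ z^2 * D N := by
      obtain ⟨k, hk⟩ := Nat.exists_eq_add_of_le hNge1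
      have hk' : N = k + 1 := by omega
      rw [hk']
      exact tb z hz k
    have h1 : |tt y a b z n| ≤ |tt y a b z N| * g N / g n := by
      rw [le_div_iff₀ (hgpos n)]
      exact hch
    refine h1.trans ?_
    have h2 : |tt y a b z N| * g N ≤ z^2 * D N * g N :=
      mul_le_mul_of_nonneg_right hNb (hgpos N).le
    calc |tt y a b z N| * g N / g n ≤ z^2 * D N * g N / g n :=
          (div_le_div_iff_of_pos_right (hgpos n)).mpr h2
      _ = z^2 * (D N * g N / g n) := by ring
  -- comparison sequence
  set c : ℕ → ℝ := fun n => if n < N then D n else D N * g N / g n with hc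
  have hc0 : ∀ n, 0 ≤ c n := by
    intro n
    rw [hc]
    by_cases h : n < N
    · simp only [if_pos h]; exact hD0 n
    · simp only [if_neg h]
      exact div_nonneg (mul_nonneg (hD0 N) (hgpos N).le) (hgpos n).le
  have hcb : ∀ z : ℝ, |z| ≤ δ → ∀ n : ℕ, |tt y a b z (n+1)| ≤ z^2 * c (n+1) := by
    intro z hz n
    rw [hc]
    by_cases h : n + 1 < N
    · simp only [if_pos h]; exact tb z hz n
    · simp only [if_neg h]; exact tail z hz (n+1) (by omega)
  have hcsum : Summable c := by
    have hf' : Summable (fun n : ℕ => D N * g N / g n) := by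
      have h5 := summable_tail (D N * g N) p hp1
      simpa [hg] using h5
    have hdiff : Summable (fun n : ℕ => c n - D N * g N / g n) := by
      apply summable_of_ne_finset_zero (s := Finset.range N)
      intro n hn
      rw [Finset.mem_range, not_lt] at hn
      rw [hc]
      simp only [if_neg (not_lt.mpr hn)]
      ring
    simpa using hdiff.add hf'
  obtain ⟨M, hM⟩ : ∃ M : ℝ, M = ∑' n, c n := ⟨_, rfl⟩
  have hM0 : 0 ≤ M := hM ▸ tsum_nonneg hc0
  -- the main bound
  have main : ∀ z : ℝ, |z| ≤ δ → |F32 (z - y) z z (a + z) (b + z) - 1| ≤ M * z^2 := by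
    intro z hz
    have hsc : Summable (fun n => z^2 * c (n+1)) :=
      ((summable_nat_add_iff 1).mpr hcsum).mul_left (z^2)
    have hsum1 : Summable (fun n => tt y a b z (n+1)) := by
      refine Summable.of_norm_bounded hsc ?_
      intro n
      rw [Real.norm_eq_abs]
      exact hcb z hz n
    have hsum : Summable (fun n => tt y a b z n) := (summable_nat_add_iff 1).mp hsum1
    have hF : F32 (z - y) z z (a + z) (b + z) = ∑' n, tt y a b z n := rfl
    have hsplit : (∑' n, tt y a b z n) = tt y a b z 0 + ∑' n, tt y a b z (n+1) :=
      Summable.tsum_eq_zero_add hsum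
    have hb1 : |∑' n, tt y a b z (n+1)| ≤ ∑' n, (z^2 * c (n+1)) := by
      have habs : |∑' n, tt y a b z (n+1)| ≤ ∑' n, |tt y a b z (n+1)| := by
        have h6 := norm_tsum_le_tsum_norm (f := fun n => tt y a b z (n+1)) ?_
        · simpa [Real.norm_eq_abs] using h6
        · simpa [Real.norm_eq_abs] using hsum1.abs
      refine habs.trans ?_
      exact Summable.tsum_le_tsum (fun n => hcb z hz n) hsum1.abs hsc
    have hb2 : (∑' n, (z^2 * c (n+1))) = z^2 * ∑' n, c (n+1) := tsum_mul_left
    have hb3 : (∑' n, c (n+1)) ≤ M := by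
      have h7 := Summable.sum_add_tsum_nat_add (f := c) 1 hcsum
      have h8 : (0:ℝ) ≤ ∑ i ∈ Finset.range 1, c i := by
        simp only [Finset.sum_range_one]
        exact hc0 0
      rw [hM]
      linarith
    rw [hF, hsplit, tt_zero]
    have h9 : (1 : ℝ) + (∑' n, tt y a b z (n+1)) - 1 = ∑' n, tt y a b z (n+1) := by ring
    rw [h9]
    calc |∑' n, tt y a b z (n+1)| ≤ ∑' n, (z^2 * c (n+1)) := hb1
      _ = z^2 * ∑' n, c (n+1) := hb2
      _ ≤ z^2 * M := by
          have := mul_le_mul_of_nonneg_left hb3 (sq_nonneg z)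
          exact this
      _ = M * z^2 := by ring
  -- value at zero
  have h0 : F32 (0 - y) 0 0 (a + 0) (b + 0) = 1 := by
    have h := main 0 (by simpa using hδ0.le)
    have h1 : |F32 (0 - y) 0 0 (a + 0) (b + 0) - 1| ≤ 0 := by simpa using h
    have h2 := abs_nonneg (F32 (0 - y) 0 0 (a + 0) (b + 0) - 1)
    have h3 : |F32 (0 - y) 0 0 (a + 0) (b + 0) - 1| = 0 := le_antisymm h1 h2
    have h4 := abs_eq_zero.mp h3
    linarith
  have h0' : F32 (-y) 0 0 a b = 1 := by simpa using h0
  -- the derivative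
  rw [hasDerivAt_iff_isLittleO_nhds_zero, Asymptotics.isLittleO_iff]
  intro C hC
  rw [Metric.eventually_nhds_iff]
  refine ⟨min δ (C/(M+1)), lt_min hδ0 (div_pos hC (by linarith)), ?_⟩
  intro z hzd
  rw [Real.dist_eq, sub_zero] at hzd
  have hz1 : |z| ≤ δ := le_of_lt (lt_of_lt_of_le hzd (min_le_left _ _))
  have hz2 : |z| ≤ C/(M+1) := le_of_lt (lt_of_lt_of_le hzd (min_le_right _ _))
  simp only [zero_add, smul_zero, sub_zero, zero_sub, add_zero]
  rw [h0', Real.norm_eq_abs, Real.norm_eq_abs]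
  have hmain := main z hz1
  have hMC : M * z^2 ≤ C * |z| := by
    have h3 : M * |z| ≤ M * (C/(M+1)) := mul_le_mul_of_nonneg_left hz2 hM0
    have h4 : M * (C/(M+1)) ≤ C := by
      have hM1 : M + 1 ≠ 0 := ne_of_gt (by linarith)
      have h5 : (M+1) * (C/(M+1)) = C := by
        rw [mul_comm]
        exact div_mul_cancel₀ C hM1
      have h6 : M * (C/(M+1)) ≤ (M+1) * (C/(M+1)) :=
        mul_le_mul_of_nonneg_right (by linarith) (div_nonneg hC.le (by linarith))
      linarith
    calc M * z^2 = (M * |z|) * |z| := by rw [← sq_abs z]; ring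
      _ ≤ C * |z| := mul_le_mul_of_nonneg_right (h3.trans h4) (abs_nonneg z)
  exact le_trans hmain hMC
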